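/- (Partial soundness for the double homological product.) Let δ_{−1} ∈ M_{n0 × n_{−1}}(F2) and δ_0 ∈ M_{n1 × n0}(F2) satisfy δ_0·δ_{−1} = 0. Let R_a ∈ M_{n_{−1} × n_{−1}}(F2), R_b ∈ M_{n0 × n0}(F2), R_c ∈ M_{n1 × n1}(F2), and set S_L := δ_{−1}·R_a + R_b·δ_{−1} ∈ M_{n0 × n_{−1}}(F2) and S_R := δ_0·R_b + R_c·δ_0 ∈ M_{n1 × n0}(F2). Then there exists R_b' ∈ M_{n0 × n0}(F2) such that: (1) δ_0·R_b'·δ_{−1} = δ_0·R_b·δ_{−1} (which equals δ_0·S_L and S_R·δ_{−1}); (2) |R_b'| ≤ |S_L|·|S_R|; (3) the remainder S_L − R_b'·δ_{−1} has every column in ker(δ_0), at most |S_L| nonzero columns, and every column of Hamming weight at most |S_L|; (4) the remainder S_R − δ_0·R_b' has every row r (as a column vector) satisfying δ_{−1}ᵀ·r = 0, at most |S_R| nonzero rows, and every row of Hamming weight at most |S_R|. -/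

import Mathlib

open Matrix
open scoped Kronecker

abbrev F2 := ZMod 2

/-- Hamming weight of a vector over `F2`. -/
def vwt {ι : Type*} [Fintype ι] (v : ι → F2) : ℕ :=
  (Finset.univ.filter fun i => v i ≠ 0).card

/-- Hamming weight of a matrix over `F2` (number of nonzero entries). -/
def mwt {ι κ : Type*} [Fintype ι] [Fintype κ] (M : Matrix ι κ F2) : ℕ :=
  (Finset.univ.filter fun p : ι × κ => M p.1 p.2 ≠ 0).card

/-- Nullity of a matrix over `F2`: dimension of the kernel of the induced linear map. -/
noncomputable def nullity {ι κ : Type*} [Fintype ι] [Fintype κ] (M : Matrix ι κ F2) : ℕ :=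
  Module.finrank F2 (LinearMap.ker M.mulVecLin)

/-- Every matrix over `F2` has a generalized inverse. -/
lemma exists_genInv {a b : ℕ} (T : Matrix (Fin a) (Fin b) F2) :
    ∃ C : Matrix (Fin b) (Fin a) F2, T * C * T = T := by
  set f := Matrix.toLin' T with hf
  obtain ⟨g', hg'⟩ := f.rangeRestrict.exists_rightInverse_of_surjective
    (LinearMap.range_eq_top.mpr f.surjective_rangeRestrict)
  obtain ⟨q, hq⟩ := Submodule.exists_isCompl (LinearMap.range f)
  set p := (LinearMap.range f).linearProjOfIsCompl q hq with hp
  refine ⟨LinearMap.toMatrix' (g'.comp p), ?_⟩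
  have key : ∀ x, f ((g'.comp p) (f x)) = f x := by
    intro x
    have h1 : p (f x) = ⟨f x, LinearMap.mem_range_self f x⟩ :=
      Submodule.linearProjOfIsCompl_apply_left hq ⟨f x, LinearMap.mem_range_self f x⟩
    have h2 : f.rangeRestrict (g' ⟨f x, LinearMap.mem_range_self f x⟩)
        = ⟨f x, LinearMap.mem_range_self f x⟩ := by
      rw [← LinearMap.comp_apply, hg']; rfl
    have h3 := congrArg Subtype.val h2
    simp only [LinearMap.comp_apply, h1]
    exact h3
  apply Matrix.toLin'.injective
  rw [Matrix.toLin'_mul, Matrix.toLin'_mul, Matrix.toLin'_toMatrix']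
  exact LinearMap.ext key

open Classical in
lemma card_rows_le {m n : ℕ} (A : Matrix (Fin m) (Fin n) F2) :
    (Finset.univ.filter fun i => ∃ k, A i k ≠ 0).card ≤ mwt A := by
  classical
  have : (Finset.univ.filter fun i => ∃ k, A i k ≠ 0)
      = (Finset.univ.filter fun p : Fin m × Fin n => A p.1 p.2 ≠ 0).image Prod.fst := by
    ext i; simp
  rw [this]; exact Finset.card_image_le

lemma card_cols_le {m n : ℕ} (A : Matrix (Fin m) (Fin n) F2) :
    (Finset.univ.filter fun j => ∃ i, A i j ≠ 0).card ≤ mwt A := by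
  classical
  have : (Finset.univ.filter fun j => ∃ i, A i j ≠ 0)
      = (Finset.univ.filter fun p : Fin m × Fin n => A p.1 p.2 ≠ 0).image Prod.snd := by
    ext j; simp
  rw [this]; exact Finset.card_image_le

lemma mul_row_zero {m n p : ℕ} (A : Matrix (Fin m) (Fin n) F2)
    (B : Matrix (Fin n) (Fin p) F2) (i : Fin m) (h : ∀ k, A i k = 0) (j : Fin p) :
    (A * B) i j = 0 := by
  simp [Matrix.mul_apply, h]

lemma mul_col_zero {m n p : ℕ} (A : Matrix (Fin m) (Fin n) F2)
    (B : Matrix (Fin n) (Fin p) F2) (j : Fin p) (h : ∀ k, B k j = 0) (i : Fin m) :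
    (A * B) i j = 0 := by
  simp [Matrix.mul_apply, h]

/-- Lemma 7: partial soundness for the double homological product. -/
theorem partial_soundness
    (nm1 n0 n1 : ℕ)
    (dm1 : Matrix (Fin n0) (Fin nm1) F2) (d0 : Matrix (Fin n1) (Fin n0) F2)
    (hchain : d0 * dm1 = 0)
    (Ra : Matrix (Fin nm1) (Fin nm1) F2) (Rb : Matrix (Fin n0) (Fin n0) F2)
    (Rc : Matrix (Fin n1) (Fin n1) F2)
    (SL : Matrix (Fin n0) (Fin nm1) F2) (hSL : SL = dm1 * Ra + Rb * dm1)
    (SR : Matrix (Fin n1) (Fin n0) F2) (hSR : SR = d0 * Rb + Rc * d0) :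
    ∃ Rb' : Matrix (Fin n0) (Fin n0) F2,
      -- (1) correctness
      d0 * Rb' * dm1 = d0 * Rb * dm1 ∧
      -- (2) low weight
      mwt Rb' ≤ mwt SL * mwt SR ∧
      -- (3) small S_L remainder
      (∀ j : Fin nm1, d0.mulVec (fun i => (SL - Rb' * dm1) i j) = 0) ∧
      ((Finset.univ.filter fun j : Fin nm1 =>
          (fun i => (SL - Rb' * dm1) i j) ≠ 0).card ≤ mwt SL) ∧
      (∀ j : Fin nm1, vwt (fun i => (SL - Rb' * dm1) i j) ≤ mwt SL) ∧
      -- (4) small S_R remainder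
      (∀ i : Fin n1, dm1ᵀ.mulVec ((SR - d0 * Rb') i) = 0) ∧
      ((@Finset.filter (Fin n1) (fun i : Fin n1 => (SR - d0 * Rb') i ≠ 0) (fun _ => inferInstance)
          Finset.univ).card ≤ mwt SR) ∧
      (∀ i : Fin n1, vwt ((SR - d0 * Rb') i) ≤ mwt SR) := by
  classical
  -- d0 * SL = SR * dm1 = d0 * Rb * dm1
  have hT : d0 * SL = d0 * Rb * dm1 := by
    rw [hSL, Matrix.mul_add, ← Matrix.mul_assoc, hchain, Matrix.zero_mul, zero_add,
      Matrix.mul_assoc]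
  have hT2 : SR * dm1 = d0 * Rb * dm1 := by
    rw [hSR, Matrix.add_mul, Matrix.mul_assoc Rc d0 dm1, hchain, Matrix.mul_zero, add_zero,
      Matrix.mul_assoc]
  have hTT : SR * dm1 = d0 * SL := by rw [hT, hT2]
  obtain ⟨C, hC⟩ := exists_genInv (d0 * SL)
  set Rb' : Matrix (Fin n0) (Fin n0) F2 := SL * C * SR with hRb'
  -- (1)
  have h1 : d0 * Rb' * dm1 = d0 * Rb * dm1 := by
    calc d0 * Rb' * dm1 = d0 * SL * C * (SR * dm1) := by
          simp [hRb', Matrix.mul_assoc]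
      _ = d0 * SL * C * (d0 * SL) := by rw [hTT]
      _ = d0 * SL := hC
      _ = d0 * Rb * dm1 := hT
  -- useful factorizations
  have hfact1 : Rb' * dm1 = SL * (C * (SR * dm1)) := by
    simp [hRb', Matrix.mul_assoc]
  have hfact2 : Rb' * dm1 = (SL * C * d0) * SL := by
    calc Rb' * dm1 = (SL * C) * (SR * dm1) := by rw [hRb', Matrix.mul_assoc]
      _ = (SL * C) * (d0 * SL) := by rw [hTT]
      _ = (SL * C * d0) * SL := by simp [Matrix.mul_assoc]
  have hfact3 : d0 * Rb' = (SR * dm1) * (C * SR) := by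
    calc d0 * Rb' = (d0 * SL) * (C * SR) := by simp [hRb', Matrix.mul_assoc]
      _ = (SR * dm1) * (C * SR) := by rw [hTT]
  have hfact4 : d0 * Rb' = ((SR * dm1) * C) * SR := by
    simp [hfact3, Matrix.mul_assoc]
  have hfact5 : d0 * Rb' = SR * (dm1 * (C * SR)) := by
    simp [hfact3, Matrix.mul_assoc]
  -- D := SL - Rb' * dm1 vanishing facts
  have hDrow : ∀ i, (∀ k, SL i k = 0) → ∀ j, (SL - Rb' * dm1) i j = 0 := by
    intro i h j
    rw [Matrix.sub_apply, hfact1, h j, mul_row_zero _ _ i h, sub_zero]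
  have hDcol : ∀ j, (∀ i, SL i j = 0) → ∀ i, (SL - Rb' * dm1) i j = 0 := by
    intro j h i
    rw [Matrix.sub_apply, hfact2, h i, mul_col_zero _ _ j h, sub_zero]
  -- E := SR - d0 * Rb' vanishing facts
  have hErow : ∀ i, (∀ k, SR i k = 0) → ∀ j, (SR - d0 * Rb') i j = 0 := by
    intro i h j
    rw [Matrix.sub_apply, hfact5, h j, mul_row_zero _ _ i h, sub_zero]
  have hEcol : ∀ j, (∀ i, SR i j = 0) → ∀ i, (SR - d0 * Rb') i j = 0 := by
    intro j h i
    rw [Matrix.sub_apply, hfact4, h i, mul_col_zero _ _ j h, sub_zero]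
  -- matrix-level kernel facts
  have hd0D : d0 * (SL - Rb' * dm1) = 0 := by
    rw [Matrix.mul_sub, ← Matrix.mul_assoc, h1, hT, sub_self]
  have hEdm1 : (SR - d0 * Rb') * dm1 = 0 := by
    rw [Matrix.sub_mul, hT2, Matrix.mul_assoc, ← Matrix.mul_assoc, h1, sub_self]
  refine ⟨Rb', h1, ?_, ?_, ?_, ?_, ?_, ?_, ?_⟩
  · -- (2) low weight
    have hsub : (Finset.univ.filter fun p : Fin n0 × Fin n0 => Rb' p.1 p.2 ≠ 0) ⊆
        (Finset.univ.filter fun i => ∃ k, SL i k ≠ 0) ×ˢ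
        (Finset.univ.filter fun j => ∃ i, SR i j ≠ 0) := by
      intro p hp
      simp only [Finset.mem_filter, Finset.mem_univ, true_and] at hp
      simp only [Finset.mem_product, Finset.mem_filter, Finset.mem_univ, true_and]
      constructor
      · by_contra h; push_neg at h
        exact hp (by rw [hRb', Matrix.mul_assoc]; exact mul_row_zero _ _ p.1 h p.2)
      · by_contra h; push_neg at h
        exact hp (by rw [hRb']; exact mul_col_zero _ _ p.2 h p.1)
    calc mwt Rb' ≤ ((Finset.univ.filter fun i => ∃ k, SL i k ≠ 0) ×ˢ
        (Finset.univ.filter fun j => ∃ i, SR i j ≠ 0)).card := Finset.card_le_card hsub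
      _ = (Finset.univ.filter fun i => ∃ k, SL i k ≠ 0).card *
          (Finset.univ.filter fun j => ∃ i, SR i j ≠ 0).card := Finset.card_product _ _
      _ ≤ mwt SL * mwt SR := Nat.mul_le_mul (card_rows_le SL) (card_cols_le SR)
  · -- (3a)
    intro j
    funext l
    have := congrFun (congrFun hd0D l) j
    simpa [Matrix.mulVec, Matrix.mul_apply, dotProduct] using this
  · -- (3b)
    refine le_trans (Finset.card_le_card ?_) (card_cols_le SL)
    intro j hj
    simp only [Finset.mem_filter, Finset.mem_univ, true_and] at hj ⊢
    by_contra h; push_neg at h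
    exact hj (funext fun i => hDcol j h i)
  · -- (3c)
    intro j
    refine le_trans (Finset.card_le_card ?_) (card_rows_le SL)
    intro i hi
    simp only [Finset.mem_filter, Finset.mem_univ, true_and] at hi ⊢
    by_contra h; push_neg at h
    exact hi (hDrow i h j)
  · -- (4a)
    intro i
    funext l
    have := congrFun (congrFun hEdm1 i) l
    simp only [Matrix.mul_apply, Matrix.zero_apply] at this
    simpa [Matrix.mulVec, Matrix.transpose_apply, dotProduct, mul_comm] using this
  · -- (4b)
    refine le_trans (Finset.card_le_card ?_) (card_rows_le SR)
    intro i hi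
    simp only [Finset.mem_filter, Finset.mem_univ, true_and] at hi ⊢
    by_contra h; push_neg at h
    exact hi (funext fun j => hErow i h j)
  · -- (4c)
    intro i
    refine le_trans (Finset.card_le_card ?_) (card_cols_le SR)
    intro j hj
    simp only [Finset.mem_filter, Finset.mem_univ, true_and] at hj ⊢
    by_contra h; push_neg at h
    exact hj (hEcol j h i)
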